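/- Lemma (set D). Let q ∈ Prob({0,1}²) and μ := μ₂. Then the set D := {(π₁, χ^{(1)}_{1|1}) : (π,χ) ∈ Θ₂, μ(π,χ) = q} is nonempty and equals the set of all (Pr, Se₁) ∈ [0,1]² satisfying Pr − q_{0+} ≤ Pr·Se₁ ≤ q_{1+}. -/

import Mathlib

open scoped BigOperators

noncomputable section

/-- `p` is a discrete probability density on the finite set `X`,
i.e. a function `X → [0,1]` summing to `1`. -/
def IsProb {X : Type*} [Fintype X] (p : X → ℝ) : Prop :=
  (∀ x, 0 ≤ p x ∧ p x ≤ 1) ∧ ∑ x, p x = 1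

/-- `χ` is a Markov transition density: `χ x` is a probability density for each `x`. -/
def IsMarkov {X Y : Type*} [Fintype Y] (χ : X → Y → ℝ) : Prop :=
  ∀ x, IsProb (χ x)

/-- The mixture density `μ₁(π,χ)` on `{0,1}` (indices: `χ i j = χ_{j|i}`). -/
def mu1 (π : Fin 2 → ℝ) (χ : Fin 2 → Fin 2 → ℝ) : Fin 2 → ℝ :=
  fun j => ∑ i, π i * χ i j

/-- The mixture density `μ₂(π,χ)` on `{0,1}²` (indices: `χ i j = χ_{j|i}`). -/
def mu2 (π : Fin 2 → ℝ) (χ : Fin 2 → Fin 2 × Fin 2 → ℝ) : Fin 2 × Fin 2 → ℝ :=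
  fun j => ∑ i, π i * χ i j

/-- First-test characteristic: `chi1 χ i ι = χ^{(1)}_{ι|i} = χ_{ι0|i} + χ_{ι1|i}`. -/
def chi1 (χ : Fin 2 → Fin 2 × Fin 2 → ℝ) : Fin 2 → Fin 2 → ℝ :=
  fun i ι => χ i (ι, 0) + χ i (ι, 1)

/-- Second-test characteristic: `chi2 χ i ι = χ^{(2)}_{ι|i} = χ_{0ι|i} + χ_{1ι|i}`. -/
def chi2 (χ : Fin 2 → Fin 2 × Fin 2 → ℝ) : Fin 2 → Fin 2 → ℝ :=
  fun i ι => χ i (0, ι) + χ i (1, ι)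

/-- The multinomial point mass `M_{n,q}({k}) = n! ∏_x q_x^{k_x}/k_x!`. -/
def mPMF {X : Type*} [Fintype X] (n : ℕ) (q : X → ℝ) (k : X → ℕ) : ℝ :=
  (n.factorial : ℝ) * ∏ x, q x ^ k x / ((k x).factorial : ℝ)

/-- `mProb n q S` is the probability, under the multinomial distribution `M_{n,q}`
(supported on `{k : Σ_x k_x = n}`), of the event `S`. -/
def mProb {X : Type*} [Fintype X] (n : ℕ) (q : X → ℝ) (S : Set (X → ℕ)) : ℝ :=
  ∑' k : X → ℕ, Set.indicator {k | (∑ x, k x) = n ∧ k ∈ S} (mPMF n q) k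


lemma helper_split (S u v : ℝ) (h : u + v ≠ 0) :
    S - S * u / (u + v) = S * (v / (u + v)) := by
  field_simp
  ring

set_option maxHeartbeats 2000000 in
/-- Lemma (set D): the set of pairs `(Pr, Se₁)` compatible with `q`. -/
theorem stmt_10 (q : Fin 2 × Fin 2 → ℝ) (hq : IsProb q) :
    Set.Nonempty {x : ℝ × ℝ |
        ∃ π : Fin 2 → ℝ, ∃ χ : Fin 2 → Fin 2 × Fin 2 → ℝ,
          IsProb π ∧ IsMarkov χ ∧ mu2 π χ = q ∧ x = (π 1, chi1 χ 1 1)} ∧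
    {x : ℝ × ℝ |
        ∃ π : Fin 2 → ℝ, ∃ χ : Fin 2 → Fin 2 × Fin 2 → ℝ,
          IsProb π ∧ IsMarkov χ ∧ mu2 π χ = q ∧ x = (π 1, chi1 χ 1 1)} =
    {x : ℝ × ℝ |
        x.1 ∈ Set.Icc (0:ℝ) 1 ∧ x.2 ∈ Set.Icc (0:ℝ) 1 ∧
        x.1 - (q (0, 0) + q (0, 1)) ≤ x.1 * x.2 ∧ x.1 * x.2 ≤ q (1, 0) + q (1, 1)} := by
  obtain ⟨hq01, hqsum⟩ := hq
  have hq00 := (hq01 (0,0)).1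
  have hq01' := (hq01 (0,1)).1
  have hq10 := (hq01 (1,0)).1
  have hq11 := (hq01 (1,1)).1
  have hqs : q (0,0) + (q (0,1) + (q (1,0) + q (1,1))) = 1 := by
    simpa [Fintype.sum_prod_type, Fin.sum_univ_two, add_assoc] using hqsum
  have hset : {x : ℝ × ℝ |
        ∃ π : Fin 2 → ℝ, ∃ χ : Fin 2 → Fin 2 × Fin 2 → ℝ,
          IsProb π ∧ IsMarkov χ ∧ mu2 π χ = q ∧ x = (π 1, chi1 χ 1 1)} =
      {x : ℝ × ℝ |
        x.1 ∈ Set.Icc (0:ℝ) 1 ∧ x.2 ∈ Set.Icc (0:ℝ) 1 ∧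
        x.1 - (q (0, 0) + q (0, 1)) ≤ x.1 * x.2 ∧ x.1 * x.2 ≤ q (1, 0) + q (1, 1)} := by
    ext x
    constructor
    · rintro ⟨π, χ, ⟨hπ01, hπsum⟩, hχ, hμ, hx⟩
      have hπs : π 0 + π 1 = 1 := by simpa [Fin.sum_univ_two] using hπsum
      have hπ0 := (hπ01 0).1
      have hπ1 := (hπ01 1).1
      have hrow : ∀ i, χ i (0,0) + (χ i (0,1) + (χ i (1,0) + χ i (1,1))) = 1 := by
        intro i
        simpa [Fintype.sum_prod_type, Fin.sum_univ_two, add_assoc] using (hχ i).2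
      have hμ' : ∀ j, π 0 * χ 0 j + π 1 * χ 1 j = q j := by
        intro j
        have := congrFun hμ j
        simpa [mu2, Fin.sum_univ_two] using this
      have e00 := hμ' (0,0); have e01 := hμ' (0,1)
      have e10 := hμ' (1,0); have e11 := hμ' (1,1)
      have c100 := (hχ 1).1 (0,0); have c101 := (hχ 1).1 (0,1)
      have c110 := (hχ 1).1 (1,0); have c111 := (hχ 1).1 (1,1)
      have c000 := (hχ 0).1 (0,0); have c001 := (hχ 0).1 (0,1)
      have c010 := (hχ 0).1 (1,0); have c011 := (hχ 0).1 (1,1)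
      have h1 := hrow 1
      have hx1 : x.1 = π 1 := by rw [hx]
      have hx2 : x.2 = χ 1 (1,0) + χ 1 (1,1) := by rw [hx]; rfl
      have p00 : 0 ≤ π 0 * χ 0 (0,0) := mul_nonneg hπ0 c000.1
      have p01 : 0 ≤ π 0 * χ 0 (0,1) := mul_nonneg hπ0 c001.1
      have p10 : 0 ≤ π 0 * χ 0 (1,0) := mul_nonneg hπ0 c010.1
      have p11 : 0 ≤ π 0 * χ 0 (1,1) := mul_nonneg hπ0 c011.1
      have r00 : 0 ≤ π 1 * χ 1 (0,0) := mul_nonneg hπ1 c100.1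
      have r01 : 0 ≤ π 1 * χ 1 (0,1) := mul_nonneg hπ1 c101.1
      refine ⟨⟨by rw [hx1]; exact hπ1, by rw [hx1]; exact (hπ01 1).2⟩,
        ⟨by rw [hx2]; linarith [c110.1, c111.1],
         by rw [hx2]; linarith [c100.1, c101.1]⟩, ?_, ?_⟩
      · rw [hx1, hx2]
        nlinarith [mul_nonneg hπ1 (add_nonneg c100.1 c101.1)]
      · rw [hx1, hx2]
        nlinarith
    · rintro ⟨⟨hP0, hP1⟩, ⟨hS0, hS1⟩, hlo, hhi⟩
      set P := x.1 with hPdef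
      set S := x.2 with hSdef
      -- construction
      set a : ℝ := if q (1,0) + q (1,1) = 0 then S else S * q (1,0) / (q (1,0) + q (1,1)) with ha
      set b : ℝ := S - a with hb
      set c : ℝ := if q (0,0) + q (0,1) = 0 then 1 - S else (1 - S) * q (0,0) / (q (0,0) + q (0,1)) with hc
      set d : ℝ := (1 - S) - c with hd
      have ha0 : 0 ≤ a := by
        rw [ha]; split
        · exact hS0
        · exact div_nonneg (mul_nonneg hS0 hq10) (by linarith)
      have hb0 : 0 ≤ b := by
        rw [hb, ha]; split
        · simp
        · rename_i h
          have hpos : 0 < q (1,0) + q (1,1) := lt_of_le_of_ne (by linarith) (Ne.symm h)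
          rw [sub_nonneg, div_le_iff₀ hpos]
          nlinarith
      have hc0 : 0 ≤ c := by
        rw [hc]; split
        · linarith
        · exact div_nonneg (mul_nonneg (by linarith) hq00) (by linarith)
      have hd0 : 0 ≤ d := by
        rw [hd, hc]; split
        · simp
        · rename_i h
          have hpos : 0 < q (0,0) + q (0,1) := lt_of_le_of_ne (by linarith) (Ne.symm h)
          rw [sub_nonneg, div_le_iff₀ hpos]
          nlinarith
      have hab : a + b = S := by rw [hb]; ring
      have hcd : c + d = 1 - S := by rw [hd]; ring
      have hPa : P * a ≤ q (1,0) := by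
        rw [ha]; split
        · rename_i h
          have hh : P * S ≤ 0 := by rw [h] at hhi; exact hhi
          have : q (1,0) = 0 := by
            have := add_eq_zero_iff_of_nonneg hq10 hq11 |>.mp h
            exact this.1
          rw [this]
          nlinarith [mul_nonneg hP0 hS0]
        · rename_i h
          have hpos : 0 < q (1,0) + q (1,1) := lt_of_le_of_ne (by linarith) (Ne.symm h)
          calc P * (S * q (1,0) / (q (1,0) + q (1,1)))
              = (P * S) * (q (1,0) / (q (1,0) + q (1,1))) := by ring
            _ ≤ (q (1,0) + q (1,1)) * (q (1,0) / (q (1,0) + q (1,1))) :=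
                mul_le_mul_of_nonneg_right hhi (div_nonneg hq10 hpos.le)
            _ = q (1,0) := by rw [mul_comm, div_mul_cancel₀ _ (ne_of_gt hpos)]
      have hPb : P * b ≤ q (1,1) := by
        rw [hb, ha]; split
        · rename_i h
          simp only [sub_self, mul_zero]
          linarith
        · rename_i h
          have hpos : 0 < q (1,0) + q (1,1) := lt_of_le_of_ne (by linarith) (Ne.symm h)
          calc P * (S - S * q (1,0) / (q (1,0) + q (1,1)))
              = (P * S) * (q (1,1) / (q (1,0) + q (1,1))) := by
                rw [helper_split _ _ _ h]; ring
            _ ≤ (q (1,0) + q (1,1)) * (q (1,1) / (q (1,0) + q (1,1))) :=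
                mul_le_mul_of_nonneg_right hhi (div_nonneg hq11 hpos.le)
            _ = q (1,1) := by rw [mul_comm, div_mul_cancel₀ _ (ne_of_gt hpos)]
      have hPS0 : 0 ≤ P * (1 - S) := mul_nonneg hP0 (by linarith)
      have hPcd : P * (1 - S) ≤ q (0,0) + q (0,1) := by nlinarith
      have hPc : P * c ≤ q (0,0) := by
        rw [hc]; split
        · rename_i h
          rw [h] at hPcd
          have : q (0,0) = 0 := by
            have := add_eq_zero_iff_of_nonneg hq00 hq01' |>.mp h
            exact this.1
          rw [this]
          nlinarith
        · rename_i h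
          have hpos : 0 < q (0,0) + q (0,1) := lt_of_le_of_ne (by linarith) (Ne.symm h)
          calc P * ((1 - S) * q (0,0) / (q (0,0) + q (0,1)))
              = (P * (1 - S)) * (q (0,0) / (q (0,0) + q (0,1))) := by ring
            _ ≤ (q (0,0) + q (0,1)) * (q (0,0) / (q (0,0) + q (0,1))) :=
                mul_le_mul_of_nonneg_right hPcd (div_nonneg hq00 hpos.le)
            _ = q (0,0) := by rw [mul_comm, div_mul_cancel₀ _ (ne_of_gt hpos)]
      have hPd : P * d ≤ q (0,1) := by
        rw [hd, hc]; split
        · rename_i h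
          simp only [sub_self, mul_zero]
          linarith
        · rename_i h
          have hpos : 0 < q (0,0) + q (0,1) := lt_of_le_of_ne (by linarith) (Ne.symm h)
          calc P * ((1 - S) - (1 - S) * q (0,0) / (q (0,0) + q (0,1)))
              = (P * (1 - S)) * (q (0,1) / (q (0,0) + q (0,1))) := by
                rw [helper_split _ _ _ h]; ring
            _ ≤ (q (0,0) + q (0,1)) * (q (0,1) / (q (0,0) + q (0,1))) :=
                mul_le_mul_of_nonneg_right hPcd (div_nonneg hq01' hpos.le)
            _ = q (0,1) := by rw [mul_comm, div_mul_cancel₀ _ (ne_of_gt hpos)]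
      -- χ₁ row
      set χ1 : Fin 2 × Fin 2 → ℝ := fun j =>
        if j = (0,0) then c else if j = (0,1) then d else if j = (1,0) then a else b with hχ1
      have v00 : χ1 (0,0) = c := rfl
      have v01 : χ1 (0,1) = d := rfl
      have v10 : χ1 (1,0) = a := rfl
      have v11 : χ1 (1,1) = b := rfl
      -- case Pr = 1 : χ1 = q
      have hcase1 : P = 1 → ∀ j, χ1 j = q j := by
        intro hP1'
        have hSeq : S = q (1,0) + q (1,1) := by
          rw [hP1'] at hlo hhi; nlinarith
        have haq : a = q (1,0) := by
          rw [ha]; split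
          · rename_i h; rw [hSeq, h]
            exact ((add_eq_zero_iff_of_nonneg hq10 hq11).mp h).1.symm
          · rename_i h; rw [hSeq]; exact mul_div_cancel_left₀ _ h
        have hbq : b = q (1,1) := by rw [hb, haq, hSeq]; ring
        have hcq : c = q (0,0) := by
          rw [hc]; split
          · rename_i h
            rw [hSeq]
            linarith
          · rename_i h; rw [hSeq]
            have he : (1:ℝ) - (q (1,0) + q (1,1)) = q (0,0) + q (0,1) := by linarith
            rw [he]; exact mul_div_cancel_left₀ _ h
        have hdq : d = q (0,1) := by rw [hd, hcq, hSeq]; linarith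
        intro j
        obtain ⟨i, k⟩ := j
        fin_cases i <;> fin_cases k
        · show χ1 (0,0) = q (0,0); rw [v00, hcq]
        · show χ1 (0,1) = q (0,1); rw [v01, hdq]
        · show χ1 (1,0) = q (1,0); rw [v10, haq]
        · show χ1 (1,1) = q (1,1); rw [v11, hbq]
      set χ0 : Fin 2 × Fin 2 → ℝ := fun j =>
        if P = 1 then χ1 j else (q j - P * χ1 j) / (1 - P) with hχ0
      have w : ∀ j, χ0 j = if P = 1 then χ1 j else (q j - P * χ1 j) / (1 - P) :=
        fun j => rfl
      have hsumχ1 : ∑ j, χ1 j = c + d + (a + b) := by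
        rw [Fintype.sum_prod_type, Fin.sum_univ_two, Fin.sum_univ_two, Fin.sum_univ_two,
          v00, v01, v10, v11]
      have hsumχ0e : ∑ j, χ0 j = χ0 (0,0) + χ0 (0,1) + (χ0 (1,0) + χ0 (1,1)) := by
        rw [Fintype.sum_prod_type, Fin.sum_univ_two, Fin.sum_univ_two, Fin.sum_univ_two]
      have hrow1 : IsProb χ1 := by
        constructor
        · intro j
          obtain ⟨i, k⟩ := j
          fin_cases i <;> fin_cases k
          · show 0 ≤ χ1 (0,0) ∧ χ1 (0,0) ≤ 1; rw [v00]; exact ⟨hc0, by linarith⟩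
          · show 0 ≤ χ1 (0,1) ∧ χ1 (0,1) ≤ 1; rw [v01]; exact ⟨hd0, by linarith⟩
          · show 0 ≤ χ1 (1,0) ∧ χ1 (1,0) ≤ 1; rw [v10]; exact ⟨ha0, by linarith⟩
          · show 0 ≤ χ1 (1,1) ∧ χ1 (1,1) ≤ 1; rw [v11]; exact ⟨hb0, by linarith⟩
        · rw [hsumχ1]; linarith
      have hrow0 : IsProb χ0 := by
        by_cases hP : P = 1
        · have hee : χ0 = χ1 := by funext j; rw [w j, if_pos hP]
          rw [hee]; exact hrow1
        · have hP1' : P < 1 := lt_of_le_of_ne hP1 hP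
          have hden : (0:ℝ) < 1 - P := by linarith
          have h0le : ∀ j, 0 ≤ χ0 j := by
            intro j
            rw [w j, if_neg hP]
            apply div_nonneg _ hden.le
            obtain ⟨i, k⟩ := j
            fin_cases i <;> fin_cases k
            · show 0 ≤ q (0,0) - P * χ1 (0,0); rw [v00]; linarith
            · show 0 ≤ q (0,1) - P * χ1 (0,1); rw [v01]; linarith
            · show 0 ≤ q (1,0) - P * χ1 (1,0); rw [v10]; linarith
            · show 0 ≤ q (1,1) - P * χ1 (1,1); rw [v11]; linarith
          have hsum0 : ∑ j, χ0 j = 1 := by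
            rw [hsumχ0e, w (0,0), w (0,1), w (1,0), w (1,1)]
            rw [if_neg hP, if_neg hP, if_neg hP, if_neg hP, v00, v01, v10, v11]
            rw [← add_div, ← add_div, ← add_div,
              div_eq_one_iff_eq (by linarith : (1:ℝ) - P ≠ 0)]
            have h1 : P * a + P * b = P * S := by rw [← mul_add, hab]
            have h2 : P * c + P * d = P * (1 - S) := by rw [← mul_add, hcd]
            have h3 : P * S + P * (1 - S) = P := by ring
            linarith
          constructor
          · intro j
            refine ⟨h0le j, ?_⟩
            have hle : χ0 j ≤ ∑ j', χ0 j' :=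
              Finset.single_le_sum (fun j' _ => h0le j') (Finset.mem_univ j)
            rw [hsum0] at hle; exact hle
          · exact hsum0
      refine ⟨![1 - P, P], ![χ0, χ1], ⟨?_, ?_⟩, ?_, ?_, ?_⟩
      · intro i; fin_cases i
        · exact ⟨by show (0:ℝ) ≤ 1 - P; linarith, by show (1:ℝ) - P ≤ 1; linarith⟩
        · exact ⟨by show (0:ℝ) ≤ P; linarith, by show P ≤ 1; linarith⟩
      · rw [Fin.sum_univ_two, Matrix.cons_val_zero, Matrix.cons_val_one, Matrix.cons_val_zero]
        ring
      · intro i; fin_cases i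
        · exact hrow0
        · exact hrow1
      · -- mu2 = q
        funext j
        simp only [mu2, Fin.sum_univ_two, Matrix.cons_val_zero, Matrix.cons_val_one,
          Matrix.head_cons]
        by_cases hP : P = 1
        · rw [w j, if_pos hP, hcase1 hP j, hP]; ring
        · rw [w j, if_neg hP]
          have hden : (1:ℝ) - P ≠ 0 := by
            intro h; apply hP; linarith
          field_simp; ring
      · -- x = (π 1, chi1 χ 1 1)
        have e2 : chi1 ![χ0, χ1] 1 1 = S := by
          show χ1 (1,0) + χ1 (1,1) = S
          rw [v10, v11, hab]
        rw [e2]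
        show x = (P, S)
        exact Prod.mk.eta.symm
  refine ⟨?_, hset⟩
  rw [hset]
  refine ⟨(1, q (1,0) + q (1,1)), ?_⟩
  simp only [Set.mem_setOf_eq, Set.mem_Icc]
  refine ⟨⟨by norm_num, by norm_num⟩, ⟨by linarith, by linarith⟩, by nlinarith, by nlinarith⟩


end
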